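/- Let c, k, t be positive integers with c ≥ 2 and k ≥ t+3. Suppose R and S are cross t-intersecting families of (t+1)-element families of pairwise disjoint c-subsets of [ck] with τ_t(R) = τ_t(S) = t+1. Then R is t-intersecting if and only if S is t-intersecting; moreover if R is t-intersecting then there exists a family Z of t+2 pairwise disjoint c-subsets with R, S ⊆ {all (t+1)-subfamilies of Z}. -/

import Mathlib

open Finset

/-- `UParts c k ℓ S`: `S` is a family of `ℓ` pairwise disjoint `c`-subsets of `[ck]`. -/
def UParts (c k ℓ : ℕ) (S : Finset (Finset (Fin (c * k)))) : Prop :=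
  S.card = ℓ ∧ (∀ e ∈ S, e.card = c) ∧
    ∀ e ∈ S, ∀ f ∈ S, e ≠ f → Disjoint e f

/-- `UPartition c k F`: `F` is a `c`-uniform partition of `[ck]` into `k` blocks. -/
def UPartition (c k : ℕ) (F : Finset (Finset (Fin (c * k)))) : Prop :=
  UParts c k k F ∧ ∀ x : Fin (c * k), ∃ e ∈ F, x ∈ e

/-- Cross `t`-intersecting families: any two members from different families share `≥ t` blocks. -/
def CrossInt (c k t : ℕ) (F G : Finset (Finset (Finset (Fin (c * k))))) : Prop :=
  ∀ A ∈ F, ∀ B ∈ G, t ≤ (A ∩ B).card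

/-- `S` is a `t`-cover of the family `F`: a family of pairwise disjoint `c`-subsets meeting
every member of `F` in at least `t` blocks. -/
def IsTCover (c k t : ℕ) (F : Finset (Finset (Finset (Fin (c * k)))))
    (S : Finset (Finset (Fin (c * k)))) : Prop :=
  UParts c k S.card S ∧ ∀ A ∈ F, t ≤ (S ∩ A).card

/-- The `t`-covering number: minimum size of a `t`-cover. -/
noncomputable def tau (c k t : ℕ) (F : Finset (Finset (Finset (Fin (c * k))))) : ℕ :=
  sInf {s | ∃ S, IsTCover c k t F S ∧ S.card = s}

/-- `θ(c,k,z) = (1/(k-z)!) · ∏_{i=z}^{k-1} C((k-i)c, c)`. -/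
def theta (c k z : ℕ) : ℚ :=
  (1 / ((k - z).factorial : ℚ)) * ∏ i ∈ Finset.Ico z k, ((((k - i) * c).choose c : ℕ) : ℚ)

/-- `g(c,k,t,z) = θ(c,k,z)·C(z,t)·∏_{j=1}^{z-t}(k-(t+j-1))`. -/
def gfun (c k t z : ℕ) : ℚ :=
  theta c k z * ((z.choose t : ℕ) : ℚ) * ∏ j ∈ Finset.Icc 1 (z - t), ((k - (t + j - 1) : ℕ) : ℚ)

/-- `f₀(c,k,t) = (k-t-1)·θ(c,k,t+1) − C(k-t-1,2)·θ(c,k,t+2)`. -/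
def f0 (c k t : ℕ) : ℚ :=
  ((k - t - 1 : ℕ) : ℚ) * theta c k (t + 1) - (((k - t - 1).choose 2 : ℕ) : ℚ) * theta c k (t + 2)

/-- `f₂(c,k,t) = (t+2)·θ(c,k,t+1) − (t+1)(k-t-1)·θ(c,k,t+2)`. -/
def f2q (c k t : ℕ) : ℚ :=
  ((t : ℚ) + 2) * theta c k (t + 1) - ((t : ℚ) + 1) * ((k - t - 1 : ℕ) : ℚ) * theta c k (t + 2)


lemma tcover_contra (c k t : ℕ) (F : Finset (Finset (Finset (Fin (c * k)))))
    (hτ : tau c k t F = t + 1) (T : Finset (Finset (Fin (c * k))))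
    (hTc : T.card = t) (hcc : ∀ e ∈ T, e.card = c)
    (hd : ∀ e ∈ T, ∀ f ∈ T, e ≠ f → Disjoint e f)
    (hcov : ∀ A ∈ F, T ⊆ A) : False := by
  have hco : IsTCover c k t F T := by
    refine ⟨⟨rfl, hcc, hd⟩, fun A hA => ?_⟩
    rw [inter_eq_left.mpr (hcov A hA), hTc]
  have hmem : t ∈ {s | ∃ S, IsTCover c k t F S ∧ S.card = s} := ⟨T, hco, hTc⟩
  have := Nat.sInf_le hmem
  rw [show sInf {s | ∃ S, IsTCover c k t F S ∧ S.card = s} = tau c k t F from rfl, hτ] at this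
  omega

lemma fam_nonempty (c k t : ℕ) (F : Finset (Finset (Finset (Fin (c * k)))))
    (hτ : tau c k t F = t + 1) : F.Nonempty := by
  rw [nonempty_iff_ne_empty]
  intro h
  subst h
  have hco : IsTCover c k t (∅ : Finset (Finset (Finset (Fin (c * k))))) ∅ := by
    refine ⟨⟨rfl, by simp, by simp⟩, by simp⟩
  have hmem : 0 ∈ {s | ∃ S, IsTCover c k t (∅ : Finset (Finset (Finset (Fin (c * k))))) S ∧ S.card = s} :=
    ⟨∅, hco, card_empty⟩
  have := Nat.sInf_le hmem
  rw [show sInf {s | ∃ S, IsTCover c k t (∅ : Finset (Finset (Finset (Fin (c * k))))) S ∧ S.card = s}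
      = tau c k t ∅ from rfl, hτ] at this
  omega

lemma key_lemma (c k t : ℕ) (ht : 1 ≤ t)
    (𝓡 𝓢 : Finset (Finset (Finset (Fin (c * k)))))
    (h𝓡 : ∀ R ∈ 𝓡, UParts c k (t + 1) R) (h𝓢 : ∀ S ∈ 𝓢, UParts c k (t + 1) S)
    (hcross : CrossInt c k t 𝓡 𝓢)
    (hτR : tau c k t 𝓡 = t + 1) (hτS : tau c k t 𝓢 = t + 1)
    (hRint : ∀ R₁ ∈ 𝓡, ∀ R₂ ∈ 𝓡, t ≤ (R₁ ∩ R₂).card) :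
    ∃ Z, UParts c k (t + 2) Z ∧ (∀ R ∈ 𝓡, R ⊆ Z) ∧ ∀ S ∈ 𝓢, S ⊆ Z := by
  obtain ⟨R₀, hR₀⟩ := fam_nonempty c k t 𝓡 hτR
  -- two distinct members of 𝓡
  have hex : ∃ R₁ ∈ 𝓡, ∃ R₂ ∈ 𝓡, R₁ ≠ R₂ := by
    by_contra h
    push_neg at h
    obtain ⟨T, hTsub, hTcard⟩ := Finset.exists_subset_card_eq (show t ≤ R₀.card by
      rw [(h𝓡 R₀ hR₀).1]; omega)
    exact tcover_contra c k t 𝓡 hτR T hTcard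
      (fun e he => (h𝓡 R₀ hR₀).2.1 e (hTsub he))
      (fun e he f hf => (h𝓡 R₀ hR₀).2.2 e (hTsub he) f (hTsub hf))
      (fun A hA => by rw [← h R₀ hR₀ A hA]; exact hTsub)
  obtain ⟨R₁, hR₁, R₂, hR₂, hne⟩ := hex
  have hcard1 : R₁.card = t + 1 := (h𝓡 R₁ hR₁).1
  have hcard2 : R₂.card = t + 1 := (h𝓡 R₂ hR₂).1
  set T := R₁ ∩ R₂ with hT
  have hTcard : T.card = t := by
    have h1 : t ≤ T.card := hRint R₁ hR₁ R₂ hR₂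
    have h2 : T.card < t + 1 := by
      rcases lt_or_ge T.card (t+1) with h | h
      · exact h
      · exfalso
        have hss : T ⊆ R₁ := inter_subset_left
        have := eq_of_subset_of_card_le hss (by omega)
        have h12 : R₁ ⊆ R₂ := by rw [← this]; exact inter_subset_right
        exact hne (eq_of_subset_of_card_le h12 (by omega))
    omega
  set Z := R₁ ∪ R₂ with hZ
  have hZcard : Z.card = t + 2 := by
    have := card_union_add_card_inter R₁ R₂
    rw [← hT, ← hZ, hTcard, hcard1, hcard2] at this
    omega
  have hTZ : T ⊆ Z := inter_subset_left.trans subset_union_left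
  -- all of 𝓡 inside Z
  have hRZ : ∀ R ∈ 𝓡, R ⊆ Z := by
    intro R hR
    by_contra hns
    obtain ⟨x, hxR, hxZ⟩ := not_subset.mp hns
    have hcardR : R.card = t + 1 := (h𝓡 R hR).1
    have hWss : R ∩ Z ⊆ R := inter_subset_left
    have hWlt : (R ∩ Z).card < t + 1 := by
      have : R ∩ Z ⊂ R := ⟨hWss, fun hsub => hxZ (mem_of_mem_inter_right (hsub hxR))⟩
      have := card_lt_card this
      omega
    have hsub1 : R ∩ R₁ ⊆ R ∩ Z := inter_subset_inter (Subset.refl _) subset_union_left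
    have hsub2 : R ∩ R₂ ⊆ R ∩ Z := inter_subset_inter (Subset.refl _) subset_union_right
    have hge1 : t ≤ (R ∩ R₁).card := hRint R hR R₁ hR₁
    have hge2 : t ≤ (R ∩ R₂).card := hRint R hR R₂ hR₂
    have hW1 : R ∩ R₁ = R ∩ Z := eq_of_subset_of_card_le hsub1 (by
      have := card_le_card hsub1; omega)
    have hW2 : R ∩ R₂ = R ∩ Z := eq_of_subset_of_card_le hsub2 (by
      have := card_le_card hsub2; omega)
    have hWT : R ∩ Z ⊆ T := by
      intro z hz
      exact mem_inter.mpr ⟨mem_of_mem_inter_right (hW1 ▸ hz), mem_of_mem_inter_right (hW2 ▸ hz)⟩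
    have hWcard : (R ∩ Z).card = t := by
      have := card_le_card hWT
      have := card_le_card hsub1
      omega
    have hWeqT : R ∩ Z = T := eq_of_subset_of_card_le hWT (by omega)
    have hTR : T ⊆ R := by rw [← hWeqT]; exact inter_subset_left
    have hxT : x ∉ T := fun h => hxZ (hTZ h)
    -- R = insert x T
    have hReq : R = insert x T := by
      refine (eq_of_subset_of_card_le ?_ ?_).symm
      · intro z hz
        rcases mem_insert.mp hz with h | h
        · exact h ▸ hxR
        · exact hTR h
      · rw [card_insert_of_notMem hxT, hTcard, hcardR]
    -- singleton differences
    have hd1 : (R₁ \ T).card = 1 := by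
      rw [card_sdiff_of_subset inter_subset_left, hcard1, hTcard]; omega
    have hd2 : (R₂ \ T).card = 1 := by
      rw [card_sdiff_of_subset inter_subset_right, hcard2, hTcard]; omega
    obtain ⟨a, ha⟩ := card_eq_one.mp hd1
    obtain ⟨b, hb⟩ := card_eq_one.mp hd2
    have haR₁ : a ∈ R₁ := (mem_sdiff.mp (ha ▸ mem_singleton_self a)).1
    have haT : a ∉ T := (mem_sdiff.mp (ha ▸ mem_singleton_self a)).2
    have hbR₂ : b ∈ R₂ := (mem_sdiff.mp (hb ▸ mem_singleton_self b)).1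
    have hbT : b ∉ T := (mem_sdiff.mp (hb ▸ mem_singleton_self b)).2
    have haR₂ : a ∉ R₂ := fun h => haT (mem_inter.mpr ⟨haR₁, h⟩)
    have hbR₁ : b ∉ R₁ := fun h => hbT (mem_inter.mpr ⟨h, hbR₂⟩)
    have hab : a ≠ b := fun h => haR₂ (h ▸ hbR₂)
    have hxa : x ≠ a := fun h => hxZ (h ▸ mem_union_left _ haR₁)
    have hxb : x ≠ b := fun h => hxZ (h ▸ mem_union_right _ hbR₂)
    -- every member of 𝓡 contains T
    have hall : ∀ A ∈ 𝓡, T ⊆ A := by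
      intro R₄ hR₄
      by_contra hnT
      obtain ⟨u, huT, huR₄⟩ := not_subset.mp hnT
      have hc4 : R₄.card = t + 1 := (h𝓡 R₄ hR₄).1
      -- |R₄ ∩ T| = t - 1
      have hle : (R₄ ∩ T).card ≤ t - 1 := by
        have : R₄ ∩ T ⊆ T.erase u := fun z hz =>
          mem_erase.mpr ⟨fun h => huR₄ (h ▸ (mem_inter.mp hz).1), (mem_inter.mp hz).2⟩
        have := card_le_card this
        rw [card_erase_of_mem huT, hTcard] at this
        exact this
      have hint4 : t ≤ (R₄ ∩ R).card := hRint R₄ hR₄ R hR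
      have hRsub : R₄ ∩ R ⊆ insert x (R₄ ∩ T) := by
        intro z hz
        obtain ⟨hz4, hzR⟩ := mem_inter.mp hz
        rw [hReq] at hzR
        rcases mem_insert.mp hzR with h | h
        · exact mem_insert.mpr (Or.inl h)
        · exact mem_insert.mpr (Or.inr (mem_inter.mpr ⟨hz4, h⟩))
      have hxR₄ : x ∈ R₄ := by
        by_contra hx4
        have : R₄ ∩ R ⊆ R₄ ∩ T := by
          intro z hz
          rcases mem_insert.mp (hRsub hz) with h | h
          · exact absurd ((mem_inter.mp hz).1) (h ▸ hx4)
          · exact h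
        have := card_le_card this
        omega
      have hge' : t - 1 ≤ (R₄ ∩ T).card := by
        have h1 := card_le_card hRsub
        have h2 := card_insert_le x (R₄ ∩ T)
        omega
      have haR₄ : a ∈ R₄ := by
        by_contra ha4
        have : R₄ ∩ R₁ ⊆ R₄ ∩ T := by
          intro z hz
          obtain ⟨hz4, hz1⟩ := mem_inter.mp hz
          refine mem_inter.mpr ⟨hz4, ?_⟩
          by_contra hzT
          have : z ∈ R₁ \ T := mem_sdiff.mpr ⟨hz1, hzT⟩
          rw [ha, mem_singleton] at this
          exact ha4 (this ▸ hz4)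
        have h1 := card_le_card this
        have h2 := hRint R₄ hR₄ R₁ hR₁
        omega
      have hbR₄ : b ∈ R₄ := by
        by_contra hb4
        have : R₄ ∩ R₂ ⊆ R₄ ∩ T := by
          intro z hz
          obtain ⟨hz4, hz2⟩ := mem_inter.mp hz
          refine mem_inter.mpr ⟨hz4, ?_⟩
          by_contra hzT
          have : z ∈ R₂ \ T := mem_sdiff.mpr ⟨hz2, hzT⟩
          rw [hb, mem_singleton] at this
          exact hb4 (this ▸ hz4)
        have h1 := card_le_card this
        have h2 := hRint R₄ hR₄ R₂ hR₂
        omega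
      -- R₄ ⊇ {x,a,b} ∪ (R₄ ∩ T), card ≥ t+2
      have hbig : insert x (insert a (insert b (R₄ ∩ T))) ⊆ R₄ := by
        intro z hz
        rcases mem_insert.mp hz with h | hz
        · exact h ▸ hxR₄
        rcases mem_insert.mp hz with h | hz
        · exact h ▸ haR₄
        rcases mem_insert.mp hz with h | hz
        · exact h ▸ hbR₄
        · exact (mem_inter.mp hz).1
      have hcb : (insert x (insert a (insert b (R₄ ∩ T)))).card = (R₄ ∩ T).card + 3 := by
        have hbnot : b ∉ R₄ ∩ T := fun h => hbT (mem_inter.mp h).2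
        have hanot : a ∉ insert b (R₄ ∩ T) := by
          intro h
          rcases mem_insert.mp h with h | h
          · exact hab h
          · exact haT (mem_inter.mp h).2
        have hxnot : x ∉ insert a (insert b (R₄ ∩ T)) := by
          intro h
          rcases mem_insert.mp h with h | h
          · exact hxa h
          rcases mem_insert.mp h with h | h
          · exact hxb h
          · exact hxT (mem_inter.mp h).2
        rw [card_insert_of_notMem hxnot, card_insert_of_notMem hanot,
          card_insert_of_notMem hbnot]
      have := card_le_card hbig
      omega
    exact tcover_contra c k t 𝓡 hτR T hTcard
      (fun e he => (h𝓡 R₁ hR₁).2.1 e (inter_subset_left he))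
      (fun e he f hf => (h𝓡 R₁ hR₁).2.2 e (inter_subset_left he) f (inter_subset_left hf))
      hall
  -- all of 𝓢 inside Z
  have hSZ : ∀ S ∈ 𝓢, S ⊆ Z := by
    intro S hS
    by_contra hns
    obtain ⟨x, hxS, hxZ⟩ := not_subset.mp hns
    have hcardS : S.card = t + 1 := (h𝓢 S hS).1
    have hWlt : (S ∩ Z).card < t + 1 := by
      have : S ∩ Z ⊂ S := ⟨inter_subset_left, fun hsub => hxZ (mem_of_mem_inter_right (hsub hxS))⟩
      have := card_lt_card this
      omega
    have hall : ∀ A ∈ 𝓢, True := fun _ _ => trivial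
    have hcov : ∀ A ∈ 𝓡, S ∩ Z ⊆ A := by
      intro R hR
      have hsub : S ∩ R ⊆ S ∩ Z := inter_subset_inter (Subset.refl _) (hRZ R hR)
      have hge : t ≤ (S ∩ R).card := by
        have := hcross R hR S hS
        rwa [inter_comm] at this
      have := card_le_card hsub
      have heq : S ∩ R = S ∩ Z := eq_of_subset_of_card_le hsub (by omega)
      rw [← heq]
      exact inter_subset_right
    have hWcard : (S ∩ Z).card = t := by
      obtain ⟨R, hR⟩ := fam_nonempty c k t 𝓡 hτR
      have hsub : S ∩ R ⊆ S ∩ Z := inter_subset_inter (Subset.refl _) (hRZ R hR)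
      have hge : t ≤ (S ∩ R).card := by
        have := hcross R hR S hS
        rwa [inter_comm] at this
      have := card_le_card hsub
      omega
    exact tcover_contra c k t 𝓡 hτR (S ∩ Z) hWcard
      (fun e he => (h𝓢 S hS).2.1 e (inter_subset_left he))
      (fun e he f hf => (h𝓢 S hS).2.2 e (inter_subset_left he) f (inter_subset_left hf))
      hcov
  -- Z is a valid UParts family
  refine ⟨Z, ⟨hZcard, ?_, ?_⟩, hRZ, hSZ⟩
  · intro e he
    rcases mem_union.mp he with h | h
    · exact (h𝓡 R₁ hR₁).2.1 e h
    · exact (h𝓡 R₂ hR₂).2.1 e h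
  · intro e he f hf hef
    rcases mem_union.mp he with he1 | he2 <;> rcases mem_union.mp hf with hf1 | hf2
    · exact (h𝓡 R₁ hR₁).2.2 e he1 f hf1 hef
    · by_cases hf1 : f ∈ R₁
      · exact (h𝓡 R₁ hR₁).2.2 e he1 f hf1 hef
      by_cases he2 : e ∈ R₂
      · exact (h𝓡 R₂ hR₂).2.2 e he2 f hf2 hef
      -- e ∈ R₁ \ T, f ∈ R₂ \ T: use 𝓢 to conclude disjointness
      by_contra hnd
      have heT : e ∉ T := fun h => he2 (mem_of_mem_inter_right h)
      have hfT : f ∉ T := fun h => hf1 (mem_of_mem_inter_left h)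
      have hcov : ∀ A ∈ 𝓢, T ⊆ A := by
        intro S hS
        have hSsub := hSZ S hS
        have hScard : S.card = t + 1 := (h𝓢 S hS).1
        have hnot : e ∉ S ∨ f ∉ S := by
          by_contra h
          push_neg at h
          exact hnd ((h𝓢 S hS).2.2 e h.1 f h.2 hef)
        rcases hnot with h | h
        · have hsub : S ⊆ Z.erase e := fun z hz =>
            mem_erase.mpr ⟨fun hze => h (hze ▸ hz), hSsub hz⟩
          have : S = Z.erase e := eq_of_subset_of_card_le hsub (by
            rw [card_erase_of_mem (mem_union.mpr (Or.inl he1)), hZcard, hScard]; omega)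
          rw [this]
          exact fun z hz => mem_erase.mpr ⟨fun hze => heT (hze ▸ hz), hTZ hz⟩
        · have hsub : S ⊆ Z.erase f := fun z hz =>
            mem_erase.mpr ⟨fun hzf => h (hzf ▸ hz), hSsub hz⟩
          have : S = Z.erase f := eq_of_subset_of_card_le hsub (by
            rw [card_erase_of_mem (mem_union.mpr (Or.inr hf2)), hZcard, hScard]; omega)
          rw [this]
          exact fun z hz => mem_erase.mpr ⟨fun hzf => hfT (hzf ▸ hz), hTZ hz⟩
      exact tcover_contra c k t 𝓢 hτS T hTcard
        (fun e' he' => (h𝓡 R₁ hR₁).2.1 e' (inter_subset_left he'))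
        (fun e' he' f' hf' => (h𝓡 R₁ hR₁).2.2 e' (inter_subset_left he') f' (inter_subset_left hf'))
        hcov
    · -- symmetric: e ∈ R₂, f ∈ R₁
      by_cases he1 : e ∈ R₁
      · exact (h𝓡 R₁ hR₁).2.2 e he1 f hf1 hef
      by_cases hf2 : f ∈ R₂
      · exact (h𝓡 R₂ hR₂).2.2 e he2 f hf2 hef
      by_contra hnd
      have heT : e ∉ T := fun h => he1 (mem_of_mem_inter_left h)
      have hfT : f ∉ T := fun h => hf2 (mem_of_mem_inter_right h)
      have hcov : ∀ A ∈ 𝓢, T ⊆ A := by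
        intro S hS
        have hSsub := hSZ S hS
        have hScard : S.card = t + 1 := (h𝓢 S hS).1
        have hnot : e ∉ S ∨ f ∉ S := by
          by_contra h
          push_neg at h
          exact hnd ((h𝓢 S hS).2.2 e h.1 f h.2 hef)
        rcases hnot with h | h
        · have hsub : S ⊆ Z.erase e := fun z hz =>
            mem_erase.mpr ⟨fun hze => h (hze ▸ hz), hSsub hz⟩
          have : S = Z.erase e := eq_of_subset_of_card_le hsub (by
            rw [card_erase_of_mem (mem_union.mpr (Or.inr he2)), hZcard, hScard]; omega)
          rw [this]
          exact fun z hz => mem_erase.mpr ⟨fun hze => heT (hze ▸ hz), hTZ hz⟩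
        · have hsub : S ⊆ Z.erase f := fun z hz =>
            mem_erase.mpr ⟨fun hzf => h (hzf ▸ hz), hSsub hz⟩
          have : S = Z.erase f := eq_of_subset_of_card_le hsub (by
            rw [card_erase_of_mem (mem_union.mpr (Or.inl hf1)), hZcard, hScard]; omega)
          rw [this]
          exact fun z hz => mem_erase.mpr ⟨fun hzf => hfT (hzf ▸ hz), hTZ hz⟩
      exact tcover_contra c k t 𝓢 hτS T hTcard
        (fun e' he' => (h𝓡 R₁ hR₁).2.1 e' (inter_subset_left he'))
        (fun e' he' f' hf' => (h𝓡 R₁ hR₁).2.2 e' (inter_subset_left he') f' (inter_subset_left hf'))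
        hcov
    · exact (h𝓡 R₂ hR₂).2.2 e he2 f hf2 hef

lemma subZ_int (c k t : ℕ) (Z A B : Finset (Finset (Fin (c * k))))
    (hZ : Z.card = t + 2) (hA : A ⊆ Z) (hB : B ⊆ Z)
    (hAc : A.card = t + 1) (hBc : B.card = t + 1) : t ≤ (A ∩ B).card := by
  have h1 := card_union_add_card_inter A B
  have h2 : (A ∪ B).card ≤ t + 2 := hZ ▸ card_le_card (union_subset hA hB)
  omega

theorem stmt6 (c k t : ℕ) (hc : 2 ≤ c) (ht : 1 ≤ t) (hk : t + 3 ≤ k)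
    (𝓡 𝓢 : Finset (Finset (Finset (Fin (c * k)))))
    (h𝓡 : ∀ R ∈ 𝓡, UParts c k (t + 1) R) (h𝓢 : ∀ S ∈ 𝓢, UParts c k (t + 1) S)
    (hcross : CrossInt c k t 𝓡 𝓢)
    (hτR : tau c k t 𝓡 = t + 1) (hτS : tau c k t 𝓢 = t + 1) :
    ((∀ R₁ ∈ 𝓡, ∀ R₂ ∈ 𝓡, t ≤ (R₁ ∩ R₂).card) ↔
      (∀ S₁ ∈ 𝓢, ∀ S₂ ∈ 𝓢, t ≤ (S₁ ∩ S₂).card)) ∧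
    ((∀ R₁ ∈ 𝓡, ∀ R₂ ∈ 𝓡, t ≤ (R₁ ∩ R₂).card) →
      ∃ Z, UParts c k (t + 2) Z ∧ (∀ R ∈ 𝓡, R ⊆ Z) ∧ ∀ S ∈ 𝓢, S ⊆ Z) := by
  have hcross' : CrossInt c k t 𝓢 𝓡 := fun S hS R hR => by
    rw [inter_comm]; exact hcross R hR S hS
  constructor
  · constructor
    · intro hRint
      obtain ⟨Z, hZ, hRZ, hSZ⟩ :=
        key_lemma c k t ht 𝓡 𝓢 h𝓡 h𝓢 hcross hτR hτS hRint
      intro S₁ hS₁ S₂ hS₂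
      exact subZ_int c k t Z S₁ S₂ hZ.1 (hSZ S₁ hS₁) (hSZ S₂ hS₂)
        (h𝓢 S₁ hS₁).1 (h𝓢 S₂ hS₂).1
    · intro hSint
      obtain ⟨Z, hZ, hSZ, hRZ⟩ :=
        key_lemma c k t ht 𝓢 𝓡 h𝓢 h𝓡 hcross' hτS hτR hSint
      intro R₁ hR₁ R₂ hR₂
      exact subZ_int c k t Z R₁ R₂ hZ.1 (hRZ R₁ hR₁) (hRZ R₂ hR₂)
        (h𝓡 R₁ hR₁).1 (h𝓡 R₂ hR₂).1
  · intro hRint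
    exact key_lemma c k t ht 𝓡 𝓢 h𝓡 h𝓢 hcross hτR hτS hRint
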